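/- Let T0 ⊆ T0 ∪ K be a Ψ-local theory extension, K a set of clauses, and G a finite set of flat ground clauses with no nestings of extension functions. Let K0 ∪ G0 ∪ Def be obtained from K[Ψ_K(G)] ∪ G by flattening and purification (introducing fresh constants c_t with definitions c_t ≈ f(c_1,…,c_n) for extension terms). Then the following are equivalent to T0 ∪ K ∪ G ⊨ ⊥: (i) T0 ∪ K[Ψ_K(G)] ∪ G ⊨ ⊥; (ii) T0 ∪ K0 ∪ G0 ∪ Con0 ⊨ ⊥, where Con0 = { ⋀_{i=1}^n c_i ≈ d_i → c ≈ d | f(c_1,…,c_n) ≈ c and f(d_1,…,d_n) ≈ d are in Def }. -/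
import Mathlib


/- Common framework: first-order signatures with designated sets of interpreted symbols,
uninterpreted (extension) function symbols and fresh constants, clauses, flatness/linearity,
instances, locality of theory extensions, (general) uniform interpolants, and a semantic
specification of the symbol-elimination Algorithm 1 of the paper. -/

open FirstOrder FirstOrder.Language

namespace PaperSE

variable {L : FirstOrder.Language.{0, 0}}

/-- A function symbol of `L` together with its arity. Constants are the arity-0 symbols. -/
abbrev Sym (L : FirstOrder.Language.{0, 0}) : Type := Σ n : ℕ, L.Functions n

/-- Ground terms (no variables; constants are `0`-ary function symbols of `L`). -/
abbrev GTerm (L : FirstOrder.Language.{0, 0}) : Type := L.Term Empty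

/-- A ground term viewed as a term with variables from `α`. -/
def GTerm.cast {α : Type} (t : GTerm L) : L.Term α := Term.relabel Empty.elim t

/-- The term `c()` for a constant symbol `c`. -/
def constT (c : L.Functions 0) : GTerm L := Term.func c (fun j => j.elim0)

/- ### Structures, with the interpretation passed explicitly -/

def FunM (M : Type) (S : L.Structure M) {n : ℕ} (f : L.Functions n) (x : Fin n → M) : M := by
  letI := S; exact Structure.funMap f x

def RelM (M : Type) (S : L.Structure M) {n : ℕ} (r : L.Relations n) (x : Fin n → M) : Prop := by
  letI := S; exact Structure.RelMap r x

def TVal (M : Type) (S : L.Structure M) {α : Type} (v : α → M) (t : L.Term α) : M := by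
  letI := S; exact t.realize v

/-- Value of a ground term. -/
def GVal (M : Type) (S : L.Structure M) (t : GTerm L) : M :=
  TVal M S (fun e : Empty => e.elim) t

def RealizeF (M : Type) (S : L.Structure M) {α : Type} (φ : L.Formula α) (v : α → M) : Prop := by
  letI := S; exact φ.Realize v

def RealizeSent (M : Type) (S : L.Structure M) (φ : L.Sentence) : Prop :=
  RealizeF M S φ (fun e : Empty => e.elim)

def ModelsT (M : Type) (S : L.Structure M) (T : L.Theory) : Prop :=
  ∀ φ ∈ T, RealizeSent M S φ

/- ### Symbols and ground terms occurring in terms and formulas -/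

/-- The set of subterms of a term. -/
def subterms {α : Type} : L.Term α → Set (L.Term α)
  | .var a => {Term.var a}
  | .func f ts => insert (Term.func f ts) (⋃ i, subterms (ts i))

/-- The function (and constant) symbols occurring in a term. -/
def termSyms {α : Type} : L.Term α → Set (Sym L)
  | .var _ => ∅
  | .func f ts => insert ⟨_, f⟩ (⋃ i, termSyms (ts i))

/-- The list of occurrences of variables in a term. -/
def varOccs {α : Type} : L.Term α → List α
  | .var a => [a]
  | .func _ ts => (List.finRange _).flatMap (fun i => varOccs (ts i))

/-- The list of occurrences of constant symbols in a ground term. -/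
def constOccs : GTerm L → List (L.Functions 0)
  | .var e => e.elim
  | .func (l := n) f ts =>
      if h : n = 0 then [h ▸ f]
      else (List.finRange n).flatMap (fun i => constOccs (ts i))

/-- Does the term start with a function symbol from `F`? -/
def rootIn (F : Set (Sym L)) {α : Type} : L.Term α → Prop
  | .var _ => False
  | .func f _ => (⟨_, f⟩ : Sym L) ∈ F

/-- The function (and constant) symbols occurring in a bounded formula. -/
def bfSyms {α : Type} : ∀ {n : ℕ}, L.BoundedFormula α n → Set (Sym L)
  | _, .falsum => ∅
  | _, .equal t u => termSyms t ∪ termSyms u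
  | _, .rel _ ts => ⋃ i, termSyms (ts i)
  | _, .imp f g => bfSyms f ∪ bfSyms g
  | _, .all f => bfSyms f

abbrev sentSyms (s : L.Sentence) : Set (Sym L) := bfSyms s

def theorySyms (T : L.Theory) : Set (Sym L) := ⋃ s ∈ T, sentSyms s

/-- The ground terms occurring in a bounded formula. -/
def bfGTerms {α : Type} : ∀ {n : ℕ}, L.BoundedFormula α n → Set (GTerm L)
  | _, .falsum => ∅
  | _, .equal t u => {g | GTerm.cast g ∈ subterms t ∨ GTerm.cast g ∈ subterms u}
  | _, .rel _ ts => {g | ∃ i, GTerm.cast g ∈ subterms (ts i)}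
  | _, .imp f g => bfGTerms f ∪ bfGTerms g
  | _, .all f => bfGTerms f

abbrev sentGTerms (s : L.Sentence) : Set (GTerm L) := bfGTerms s

/- ### Literals and clauses -/

/-- Literals over variables `α`. -/
inductive Lit (L : FirstOrder.Language.{0, 0}) (α : Type) : Type where
  | eq (t u : L.Term α)
  | neq (t u : L.Term α)
  | rel {n : ℕ} (R : L.Relations n) (ts : Fin n → L.Term α)
  | nrel {n : ℕ} (R : L.Relations n) (ts : Fin n → L.Term α)

namespace Lit

def terms {α : Type} : Lit L α → Set (L.Term α)
  | eq t u => {t, u}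
  | neq t u => {t, u}
  | rel _ ts => Set.range ts
  | nrel _ ts => Set.range ts

/-- An atom (positive literal). -/
def Positive {α : Type} : Lit L α → Prop
  | eq _ _ => True
  | rel _ _ => True
  | _ => False

def subst {α β : Type} (σ : α → L.Term β) : Lit L α → Lit L β
  | eq t u => eq (t.subst σ) (u.subst σ)
  | neq t u => neq (t.subst σ) (u.subst σ)
  | rel R ts => rel R (fun i => (ts i).subst σ)
  | nrel R ts => nrel R (fun i => (ts i).subst σ)

def Realize (M : Type) (S : L.Structure M) {α : Type} (v : α → M) : Lit L α → Prop
  | eq t u => TVal M S v t = TVal M S v u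
  | neq t u => TVal M S v t ≠ TVal M S v u
  | rel R ts => RelM M S R (fun i => TVal M S v (ts i))
  | nrel R ts => ¬ RelM M S R (fun i => TVal M S v (ts i))

def syms {α : Type} (l : Lit L α) : Set (Sym L) := ⋃ t ∈ l.terms, termSyms t

end Lit

/-- A (universally closed) clause: a disjunction of literals with variables `Fin nvars`,
viewed as universally quantified. -/
structure Clause (L : FirstOrder.Language.{0, 0}) : Type where
  nvars : ℕ
  lits : List (Lit L (Fin nvars))

/-- A ground clause: a disjunction of ground literals. -/
abbrev GClause (L : FirstOrder.Language.{0, 0}) : Type := List (Lit L Empty)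

def Clause.instantiate (C : Clause L) (σ : Fin C.nvars → GTerm L) : GClause L :=
  C.lits.map (Lit.subst σ)

def Clause.syms (C : Clause L) : Set (Sym L) := ⋃ l ∈ C.lits, Lit.syms l

def GClause.syms (C : GClause L) : Set (Sym L) := ⋃ l ∈ C, Lit.syms l

def GClause.gterms (C : GClause L) : Set (GTerm L) := ⋃ l ∈ C, ⋃ t ∈ Lit.terms l, subterms t

def ClausesSyms (K : Set (Clause L)) : Set (Sym L) := ⋃ C ∈ K, C.syms

def GSyms (G : Set (GClause L)) : Set (Sym L) := ⋃ C ∈ G, GClause.syms C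

def GTerms (G : Set (GClause L)) : Set (GTerm L) := ⋃ C ∈ G, GClause.gterms C

/- ### Satisfaction -/

def ClauseHolds (M : Type) (S : L.Structure M) (C : Clause L) : Prop :=
  ∀ v : Fin C.nvars → M, ∃ l ∈ C.lits, Lit.Realize M S v l

def GClauseHolds (M : Type) (S : L.Structure M) (C : GClause L) : Prop :=
  ∃ l ∈ C, Lit.Realize M S (fun e : Empty => e.elim) l

def ModelsK (M : Type) (S : L.Structure M) (K : Set (Clause L)) : Prop :=
  ∀ C ∈ K, ClauseHolds M S C

def ModelsG (M : Type) (S : L.Structure M) (G : Set (GClause L)) : Prop :=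
  ∀ C ∈ G, GClauseHolds M S C

/-- Satisfiability (in the joint signature) of base theory `T0`, clause set `K`
and ground clauses `G`. -/
def SatTKG (T0 : L.Theory) (K : Set (Clause L)) (G : Set (GClause L)) : Prop :=
  ∃ (M : Type) (_ : Nonempty M) (S : L.Structure M),
    ModelsT M S T0 ∧ ModelsK M S K ∧ ModelsG M S G

/-- `G ⊨_{T0 ∪ K} θ` for a sentence `θ`. -/
def EntailsC (T0 : L.Theory) (K : Set (Clause L)) (G : Set (GClause L)) (θ : L.Sentence) : Prop :=
  ∀ (M : Type) (S : L.Structure M), Nonempty M →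
    ModelsT M S T0 → ModelsK M S K → ModelsG M S G → RealizeSent M S θ

/-- `A ⊨_{T0 ∪ K} θ` for sentences `A`, `θ`. -/
def EntailsS (T0 : L.Theory) (K : Set (Clause L)) (A θ : L.Sentence) : Prop :=
  ∀ (M : Type) (S : L.Structure M), Nonempty M →
    ModelsT M S T0 → ModelsK M S K → RealizeSent M S A → RealizeSent M S θ

/- ### Extension ground terms and instances -/

/-- `est(K, G)`: the ground terms starting with a function symbol in `F`
occurring in `K` or in `G`. -/
def estKG (F : Set (Sym L)) (K : Set (Clause L)) (G : Set (GClause L)) : Set (GTerm L) :=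
  { t | rootIn F t ∧
      ((∃ C ∈ K, ∃ l ∈ C.lits, ∃ s ∈ Lit.terms l, GTerm.cast t ∈ subterms s) ∨
       (∃ C ∈ G, t ∈ GClause.gterms C)) }

/-- `K[Tt]`: the set of ground instances of clauses of `K` all of whose terms starting
with a function symbol in `F` belong to `Tt`. -/
def instancesIn (F : Set (Sym L)) (K : Set (Clause L)) (Tt : Set (GTerm L)) :
    Set (GClause L) :=
  { D | ∃ C ∈ K, ∃ σ : Fin C.nvars → GTerm L, D = C.instantiate σ ∧
      ∀ t ∈ GClause.gterms (C.instantiate σ), rootIn F t → t ∈ Tt }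

/- ### Locality -/

/-- Locality of the extension of the theory `T0` together with base clauses `K0`
by the clauses `K`, with extension symbols `F`. -/
def LocalExt2 (F : Set (Sym L)) (T0 : L.Theory) (K0 K : Set (Clause L)) : Prop :=
  ∀ G : Set (GClause L), G.Finite →
    ((¬ ∃ (M : Type) (_ : Nonempty M) (S : L.Structure M),
        ModelsT M S T0 ∧ ModelsK M S K0 ∧ ModelsK M S K ∧ ModelsG M S G) ↔
     (¬ ∃ (M : Type) (_ : Nonempty M) (S : L.Structure M),
        ModelsT M S T0 ∧ ModelsK M S K0 ∧
          ModelsG M S (instancesIn F K (estKG F K G) ∪ G)))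

/-- Locality of the theory extension `T0 ⊆ T0 ∪ K` with extension symbols `F`. -/
abbrev LocalExt (F : Set (Sym L)) (T0 : L.Theory) (K : Set (Clause L)) : Prop :=
  LocalExt2 F T0 ∅ K

/-- `Ψ`-locality of the theory extension `T0 ⊆ T0 ∪ K` with extension symbols `F`. -/
def PsiLocalExt (F : Set (Sym L)) (T0 : L.Theory) (K : Set (Clause L))
    (Ψ : Set (GTerm L) → Set (GTerm L)) : Prop :=
  ∀ G : Set (GClause L), G.Finite →
    (¬ SatTKG T0 K G ↔ ¬ SatTKG T0 ∅ (instancesIn F K (Ψ (estKG F K G)) ∪ G))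

/- ### Flatness and linearity -/

/-- All symbols occurring directly below a function symbol from `F` are variables. -/
def flatTerm (F : Set (Sym L)) {α : Type} : L.Term α → Prop
  | .var _ => True
  | .func f ts =>
      ((⟨_, f⟩ : Sym L) ∈ F → ∀ i, ∃ a, ts i = Term.var a) ∧ ∀ i, flatTerm F (ts i)

/-- All symbols occurring directly below a function symbol from `F` are constants. -/
def flatGTerm (F : Set (Sym L)) : GTerm L → Prop
  | .var e => e.elim
  | .func f ts =>
      ((⟨_, f⟩ : Sym L) ∈ F → ∀ i, ∃ c : L.Functions 0, ts i = constT c) ∧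
        ∀ i, flatGTerm F (ts i)

def Clause.extTerms (F : Set (Sym L)) (C : Clause L) : Set (L.Term (Fin C.nvars)) :=
  { t | rootIn F t ∧ ∃ l ∈ C.lits, ∃ s ∈ Lit.terms l, t ∈ subterms s }

def Clause.Flat (F : Set (Sym L)) (C : Clause L) : Prop :=
  ∀ l ∈ C.lits, ∀ t ∈ Lit.terms l, flatTerm F t

def Clause.Linear (F : Set (Sym L)) (C : Clause L) : Prop :=
  (∀ t ∈ C.extTerms F, ∀ u ∈ C.extTerms F,
      (∃ x, x ∈ varOccs t ∧ x ∈ varOccs u) → t = u) ∧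
  (∀ t ∈ C.extTerms F, (varOccs t).Nodup)

/-- Every variable occurring in the clause occurs below a function symbol from `F`. -/
def Clause.VarsBelowExt (F : Set (Sym L)) (C : Clause L) : Prop :=
  ∀ x : Fin C.nvars, (∃ l ∈ C.lits, ∃ s ∈ Lit.terms l, x ∈ varOccs s) →
    ∃ t ∈ C.extTerms F, x ∈ varOccs t

def GClause.extTerms (F : Set (Sym L)) (C : GClause L) : Set (GTerm L) :=
  { t | rootIn F t ∧ t ∈ GClause.gterms C }

def GClause.Flat (F : Set (Sym L)) (C : GClause L) : Prop :=
  ∀ l ∈ C, ∀ t ∈ Lit.terms l, flatGTerm F t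

def GClause.Linear (F : Set (Sym L)) (C : GClause L) : Prop :=
  (∀ t ∈ GClause.extTerms F C, ∀ u ∈ GClause.extTerms F C,
      (∃ c, c ∈ constOccs t ∧ c ∈ constOccs u) → t = u) ∧
  (∀ t ∈ GClause.extTerms F C, (constOccs t).Nodup)

/- ### Agreement of structures and (reduct-)embeddings -/

/-- The two interpretations agree on all relation symbols and on the function symbols in `F`. -/
def AgreeOn (M : Type) (S1 S2 : L.Structure M) (F : Set (Sym L)) : Prop :=
  (∀ (n : ℕ) (f : L.Functions n), (⟨n, f⟩ : Sym L) ∈ F →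
      ∀ x : Fin n → M, FunM M S1 f x = FunM M S2 f x) ∧
  (∀ (n : ℕ) (r : L.Relations n) (x : Fin n → M), RelM M S1 r x ↔ RelM M S2 r x)

/-- An embedding of the reducts to the subsignature consisting of all predicate symbols and
the function symbols in `F`: an injective map preserving and reflecting all predicates and
preserving the functions in `F`. -/
structure SubEmb (L : FirstOrder.Language.{0, 0}) (F : Set (Sym L)) (M N : Type)
    (SM : L.Structure M) (SN : L.Structure N) : Type where
  toFun : M → N
  inj : Function.Injective toFun
  map_fun : ∀ (n : ℕ) (f : L.Functions n), (⟨n, f⟩ : Sym L) ∈ F →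
      ∀ x : Fin n → M, toFun (FunM M SM f x) = FunM N SN f (toFun ∘ x)
  map_rel : ∀ (n : ℕ) (r : L.Relations n) (x : Fin n → M),
      RelM M SM r x ↔ RelM N SN r (toFun ∘ x)

/- ### Quantifier elimination and related properties of the base theory -/

/-- `T0` allows quantifier elimination (for formulas over the symbols in `F0`). -/
def HasQE (T0 : L.Theory) (F0 : Set (Sym L)) : Prop :=
  ∀ (m : ℕ) (φ : L.Formula (Fin m)), bfSyms φ ⊆ F0 →
    ∃ ψ : L.Formula (Fin m), ψ.IsQF ∧ bfSyms ψ ⊆ F0 ∧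
      ∀ (M : Type) (S : L.Structure M), Nonempty M → ModelsT M S T0 →
        ∀ v : Fin m → M, (RealizeF M S φ v ↔ RealizeF M S ψ v)

def ModelsLits (M : Type) (S : L.Structure M) (A : List (Lit L Empty)) : Prop :=
  ∀ l ∈ A, Lit.Realize M S (fun e : Empty => e.elim) l

def litListSyms (A : List (Lit L Empty)) : Set (Sym L) := ⋃ l ∈ A, Lit.syms l

/-- Convexity of a theory (with clause axioms `K`). -/
def Convex (T0 : L.Theory) (K : Set (Clause L)) : Prop :=
  ∀ Γ : List (Lit L Empty), (∀ l ∈ Γ, l.Positive) →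
  ∀ (m : ℕ) (s t : Fin (m + 1) → GTerm L),
    (∀ (M : Type) (S : L.Structure M), Nonempty M → ModelsT M S T0 → ModelsK M S K →
        ModelsLits M S Γ → ∃ i, GVal M S (s i) = GVal M S (t i)) →
    ∃ i0, ∀ (M : Type) (S : L.Structure M), Nonempty M → ModelsT M S T0 → ModelsK M S K →
        ModelsLits M S Γ → GVal M S (s i0) = GVal M S (t i0)

/-- Stable infiniteness. -/
def StablyInfinite (T0 : L.Theory) (K : Set (Clause L)) : Prop :=
  ∀ φ : L.Sentence, φ.IsQF →
    (∃ (M : Type) (_ : Nonempty M) (S : L.Structure M),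
        ModelsT M S T0 ∧ ModelsK M S K ∧ RealizeSent M S φ) →
    ∃ (M : Type) (_ : Infinite M) (S : L.Structure M),
        ModelsT M S T0 ∧ ModelsK M S K ∧ RealizeSent M S φ

/-- Equality interpolation (for a convex theory with interpreted symbols `F0`). -/
def EqInterpolating (T0 : L.Theory) (F0 : Set (Sym L)) : Prop :=
  ∀ (A B : List (Lit L Empty)) (a b : L.Functions 0),
    (⟨0, a⟩ : Sym L) ∉ litListSyms B → (⟨0, b⟩ : Sym L) ∉ litListSyms A →
    (∀ (M : Type) (S : L.Structure M), Nonempty M → ModelsT M S T0 → ModelsLits M S A →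
        ModelsLits M S B → GVal M S (constT a) = GVal M S (constT b)) →
    ∃ t : GTerm L, termSyms t ⊆ F0 ∪ (litListSyms A ∩ litListSyms B) ∧
      ∀ (M : Type) (S : L.Structure M), Nonempty M → ModelsT M S T0 → ModelsLits M S A →
        ModelsLits M S B →
          GVal M S (constT a) = GVal M S t ∧ GVal M S t = GVal M S (constT b)

/-- A universal sentence. -/
def IsUniversalSent (s : L.Sentence) : Prop :=
  ∃ (m : ℕ) (ψ : L.BoundedFormula Empty m), ψ.IsQF ∧ s = ψ.alls

def IsUniversalTheory (T : L.Theory) : Prop := ∀ s ∈ T, IsUniversalSent s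

/-- Close the outermost `k` bound variables existentially. -/
def exsTo {m : ℕ} : ∀ {k : ℕ}, L.BoundedFormula Empty (m + k) → L.BoundedFormula Empty m
  | 0, φ => φ
  | _ + 1, φ => exsTo φ.ex

/-- A `∀∃`-sentence. -/
def IsAESent (s : L.Sentence) : Prop :=
  ∃ (m k : ℕ) (ψ : L.BoundedFormula Empty (m + k)), ψ.IsQF ∧ s = (exsTo ψ).alls

def IsAETheory (T : L.Theory) : Prop := ∀ s ∈ T, IsAESent s

/- ### General uniform interpolants and uniform interpolants (covers) -/

/-- `ψ` is a general uniform interpolant of the ground clause set `G` w.r.t. the theory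
`T0 ∪ K` and the symbols in `Keep` (which contains all interpreted symbols, the shared
uninterpreted symbols and the shared constants). -/
def IsGUIg (T0 : L.Theory) (K : Set (Clause L)) (G : Set (GClause L))
    (Keep : Set (Sym L)) (ψ : L.Sentence) : Prop :=
  ψ.IsQF ∧ sentSyms ψ ⊆ Keep ∧ EntailsC T0 K G ψ ∧
  ∀ θ : L.Sentence, θ.IsQF → sentSyms θ ∩ GSyms G ⊆ Keep →
    EntailsC T0 K G θ → EntailsS T0 K ψ θ

/-- `ψ` is a general uniform interpolant of the ground formula `φ` w.r.t. the theory
`T0 ∪ K` and the symbols in `Keep`. -/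
def IsGUIs (T0 : L.Theory) (K : Set (Clause L)) (φ : L.Sentence)
    (Keep : Set (Sym L)) (ψ : L.Sentence) : Prop :=
  ψ.IsQF ∧ sentSyms ψ ⊆ Keep ∧ EntailsS T0 K φ ψ ∧
  ∀ θ : L.Sentence, θ.IsQF → sentSyms θ ∩ sentSyms φ ⊆ Keep →
    EntailsS T0 K φ θ → EntailsS T0 K ψ θ

/-- `ψ` is a uniform interpolant (cover) of `Γ` w.r.t. the theory `T0 ∪ K`, the set `CC`
of (eliminable) constants and the kept constants `Cs ⊆ CC`; all other symbols are treated
as interpreted. -/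
def IsUI (T0 : L.Theory) (K : Set (Clause L)) (CC Cs : Set (Sym L)) (Γ ψ : L.Sentence) : Prop :=
  ψ.IsQF ∧ sentSyms ψ ∩ CC ⊆ Cs ∧ EntailsS T0 K Γ ψ ∧
  ∀ θ : L.Sentence, θ.IsQF → sentSyms θ ∩ sentSyms Γ ∩ CC ⊆ Cs →
    EntailsS T0 K Γ θ → EntailsS T0 K ψ θ

/- ### The semantic specification of Algorithm 1 -/

/-- The constants occurring in some term of `S` as an argument of a function symbol in `Sigs`. -/
def argConstsOf (Sigs : Set (Sym L)) (S : Set (GTerm L)) : Set (Sym L) :=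
  { p | ∃ c : L.Functions 0, p = ⟨0, c⟩ ∧
      ∃ t ∈ S, ∃ (n : ℕ) (f : L.Functions n) (ts : Fin n → GTerm L),
        t = Term.func f ts ∧ (⟨n, f⟩ : Sym L) ∈ Sigs ∧ ∃ i, ts i = constT c }

/-- Semantic specification of the output `Γ` of Algorithm 1, applied to the theory extension
`T0 ∪ K` (extension symbols `F`), the ground clauses `G` and the instantiation terms `Tt`,
keeping exactly the symbols in `Keep` (all interpreted symbols, the parameters `Sigs` and the
non-eliminated constants):  `Γ` is a ground formula over `Keep` which, on each model of `T0`,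
expresses the existence of values for the eliminated constants and for the purified names of
the extension terms (equivalently, of a reinterpretation of the eliminated symbols) satisfying
`K[Tt] ∪ G`. -/
def AlgOneOutput (F : Set (Sym L)) (T0 : L.Theory) (K : Set (Clause L)) (G : Set (GClause L))
    (Tt : Set (GTerm L)) (Keep : Set (Sym L)) (Γ : L.Sentence) : Prop :=
  Γ.IsQF ∧ sentSyms Γ ⊆ Keep ∧
  ∀ (M : Type) (S : L.Structure M), Nonempty M → ModelsT M S T0 →
    (RealizeSent M S Γ ↔
      ∃ S' : L.Structure M, AgreeOn M S S' Keep ∧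
        ModelsG M S' (instancesIn F K Tt) ∧ ModelsG M S' G)

/- ### Implicit definability -/

/-- `f` is implicitly definable w.r.t. `T0 ∪ K` over the symbols in `Pi1`:
any two interpretations (on the same universe) which agree on `Pi1` and are both models
of `T0 ∪ K` interpret `f` in the same way.  (This is the standard semantic rendering of
the definition via renaming the symbols outside `Pi1` to primed copies.) -/
def ImplicitlyDefinable (T0 : L.Theory) (K : Set (Clause L)) (Pi1 : Set (Sym L))
    {n : ℕ} (f : L.Functions n) : Prop :=
  ∀ (M : Type), Nonempty M → ∀ S1 S2 : L.Structure M,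
    AgreeOn M S1 S2 Pi1 →
    ModelsT M S1 T0 → ModelsK M S1 K → ModelsT M S2 T0 → ModelsK M S2 K →
    ∀ x : Fin n → M, FunM M S1 f x = FunM M S2 f x

end PaperSE

namespace PaperSE

open Classical in
/-- Evaluation of ground terms in which terms rooted in an extension symbol (from `F`) are
evaluated by the valuation `w` of the purification constants naming them, and all other
symbols are evaluated in the structure `S` ("purified" evaluation). -/
noncomputable def mixedEval {L : FirstOrder.Language.{0, 0}} (F : Set (Sym L)) (M : Type)
    (S : L.Structure M) (w : GTerm L → M) : GTerm L → M
  | .var e => e.elim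
  | .func f ts =>
      if (⟨_, f⟩ : Sym L) ∈ F then w (Term.func f ts)
      else FunM M S f (fun i => mixedEval F M S w (ts i))

/-- Realization of a ground literal w.r.t. an arbitrary evaluation of ground terms. -/
def LitRealizeEv {L : FirstOrder.Language.{0, 0}} (M : Type) (S : L.Structure M)
    (ev : GTerm L → M) : Lit L Empty → Prop
  | .eq t u => ev t = ev u
  | .neq t u => ev t ≠ ev u
  | .rel R ts => RelM M S R (fun i => ev (ts i))
  | .nrel R ts => ¬ RelM M S R (fun i => ev (ts i))

def GClauseHoldsEv {L : FirstOrder.Language.{0, 0}} (M : Type) (S : L.Structure M)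
    (ev : GTerm L → M) (C : GClause L) : Prop :=
  ∃ l ∈ C, LitRealizeEv M S ev l

/-- No extension symbol occurs strictly below an extension symbol. -/
def NoNest {L : FirstOrder.Language.{0, 0}} (F : Set (Sym L)) (G : Set (GClause L)) : Prop :=
  ∀ t ∈ GTerms G, rootIn F t →
    ∀ (n : ℕ) (f : L.Functions n) (ts : Fin n → GTerm L), t = Term.func f ts →
      ∀ i, ∀ s ∈ subterms (ts i), ¬ rootIn F s
/- ### Auxiliary lemmas for the proof of hierarchical reasoning -/

section Aux

variable {L : FirstOrder.Language.{0, 0}}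

lemma mem_subterms_self {α : Type} (t : L.Term α) : t ∈ subterms t := by
  cases t <;> simp [subterms]

lemma subterms_trans {α : Type} {s t u : L.Term α}
    (h1 : s ∈ subterms t) (h2 : t ∈ subterms u) : s ∈ subterms u := by
  induction u with
  | var a =>
      simp only [subterms, Set.mem_singleton_iff] at h2
      subst h2
      simpa [subterms] using h1
  | func f ts ih =>
      simp only [subterms, Set.mem_insert_iff, Set.mem_iUnion] at h2
      rcases h2 with h2 | ⟨i, h2⟩
      · subst h2; exact h1
      · simp only [subterms, Set.mem_insert_iff, Set.mem_iUnion]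
        exact Or.inr ⟨i, ih i h2⟩

lemma mem_subterms_arg {α : Type} {n : ℕ} (f : L.Functions n) (ts : Fin n → L.Term α) (i : Fin n) :
    ts i ∈ subterms (Term.func f ts) := by
  simp only [subterms, Set.mem_insert_iff, Set.mem_iUnion]
  exact Or.inr ⟨i, mem_subterms_self _⟩

lemma gterms_closed {C : GClause L} {t s : GTerm L}
    (ht : t ∈ GClause.gterms C) (hs : s ∈ subterms t) : s ∈ GClause.gterms C := by
  simp only [GClause.gterms, Set.mem_iUnion] at ht ⊢
  obtain ⟨l, hl, u, hu, htu⟩ := ht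
  exact ⟨l, hl, u, hu, subterms_trans hs htu⟩

lemma GTerms_closed {G : Set (GClause L)} {t s : GTerm L}
    (ht : t ∈ GTerms G) (hs : s ∈ subterms t) : s ∈ GTerms G := by
  simp only [GTerms, Set.mem_iUnion] at ht ⊢
  obtain ⟨C, hC, htC⟩ := ht
  exact ⟨C, hC, gterms_closed htC hs⟩

lemma TVal_func {M : Type} (S : L.Structure M) {α : Type} {n : ℕ}
    (f : L.Functions n) (ts : Fin n → L.Term α) (v : α → M) :
    TVal M S v (Term.func f ts) = FunM M S f (fun i => TVal M S v (ts i)) := rfl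

lemma GVal_func {M : Type} (S : L.Structure M) {n : ℕ}
    (f : L.Functions n) (ts : Fin n → GTerm L) :
    GVal M S (Term.func f ts) = FunM M S f (fun i => GVal M S (ts i)) := rfl

open Classical in
lemma mixedEval_func {F : Set (Sym L)} {M : Type} {S : L.Structure M} {w : GTerm L → M}
    {n : ℕ} (f : L.Functions n) (ts : Fin n → GTerm L) :
    mixedEval F M S w (Term.func f ts) =
      if (⟨n, f⟩ : Sym L) ∈ F then w (Term.func f ts)
      else FunM M S f (fun i => mixedEval F M S w (ts i)) := by
  simp only [mixedEval]

lemma TVal_agree {M : Type} (S1 S2 : L.Structure M) {α : Type} (t : L.Term α)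
    (h : ∀ p ∈ termSyms t, ∀ x : Fin p.1 → M, FunM M S1 p.2 x = FunM M S2 p.2 x)
    (v : α → M) : TVal M S1 v t = TVal M S2 v t := by
  induction t with
  | var a => rfl
  | func f ts ih =>
      rw [TVal_func, TVal_func]
      have h1 : (fun i => TVal M S1 v (ts i)) = fun i => TVal M S2 v (ts i) := by
        funext i
        refine ih i (fun p hp x => h p ?_ x)
        simp only [termSyms, Set.mem_insert_iff, Set.mem_iUnion]
        exact Or.inr ⟨i, hp⟩
      rw [h1]
      have hmem : (⟨_, f⟩ : Sym L) ∈ termSyms (Term.func f ts) := by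
        simp [termSyms]
      exact h ⟨_, f⟩ hmem _

/-- Realization of a bounded formula, with the structure passed explicitly. -/
def BRealize (M : Type) (S : L.Structure M) {α : Type} {n : ℕ}
    (φ : L.BoundedFormula α n) (v : α → M) (xs : Fin n → M) : Prop := by
  letI := S; exact φ.Realize v xs

lemma BRealize_agree {M : Type} (S1 S2 : L.Structure M) {α : Type}
    (hr : ∀ (k : ℕ) (r : L.Relations k) (x : Fin k → M), RelM M S1 r x ↔ RelM M S2 r x)
    (v : α → M) :
    ∀ {n : ℕ} (φ : L.BoundedFormula α n),
      (∀ p ∈ bfSyms φ, ∀ x : Fin p.1 → M, FunM M S1 p.2 x = FunM M S2 p.2 x) →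
      ∀ xs : Fin n → M, BRealize M S1 φ v xs ↔ BRealize M S2 φ v xs := by
  intro n φ
  induction φ with
  | falsum => exact fun _ _ => Iff.rfl
  | equal t u =>
      intro hf xs
      show TVal M S1 (Sum.elim v xs) t = TVal M S1 (Sum.elim v xs) u ↔
        TVal M S2 (Sum.elim v xs) t = TVal M S2 (Sum.elim v xs) u
      rw [TVal_agree S1 S2 t (fun p hp x => hf p (by
            simp only [bfSyms, Set.mem_union]; exact Or.inl hp) x),
          TVal_agree S1 S2 u (fun p hp x => hf p (by
            simp only [bfSyms, Set.mem_union]; exact Or.inr hp) x)]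
  | rel R ts =>
      intro hf xs
      show RelM M S1 R (fun i => TVal M S1 (Sum.elim v xs) (ts i)) ↔
        RelM M S2 R (fun i => TVal M S2 (Sum.elim v xs) (ts i))
      have h1 : (fun i => TVal M S1 (Sum.elim v xs) (ts i)) =
          fun i => TVal M S2 (Sum.elim v xs) (ts i) := by
        funext i
        exact TVal_agree S1 S2 (ts i) (fun p hp x => hf p (by
          simp only [bfSyms, Set.mem_iUnion]; exact ⟨i, hp⟩) x) _
      rw [h1]
      exact hr _ R _
  | imp φ ψ ihφ ihψ =>
      intro hf xs
      show (BRealize M S1 φ v xs → BRealize M S1 ψ v xs) ↔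
        (BRealize M S2 φ v xs → BRealize M S2 ψ v xs)
      rw [ihφ (fun p hp x => hf p (by
            simp only [bfSyms, Set.mem_union]; exact Or.inl hp) x) xs,
          ihψ (fun p hp x => hf p (by
            simp only [bfSyms, Set.mem_union]; exact Or.inr hp) x) xs]
  | all φ ih =>
      intro hf xs
      show (∀ x : M, BRealize M S1 φ v (Fin.snoc xs x)) ↔
        (∀ x : M, BRealize M S2 φ v (Fin.snoc xs x))
      exact forall_congr' fun x =>
        ih (fun p hp y => hf p (by simpa [bfSyms] using hp) y) _

lemma RealizeSent_agree {M : Type} (S1 S2 : L.Structure M) (φ : L.Sentence)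
    (hf : ∀ p ∈ sentSyms φ, ∀ x : Fin p.1 → M, FunM M S1 p.2 x = FunM M S2 p.2 x)
    (hr : ∀ (k : ℕ) (r : L.Relations k) (x : Fin k → M), RelM M S1 r x ↔ RelM M S2 r x) :
    RealizeSent M S1 φ ↔ RealizeSent M S2 φ :=
  BRealize_agree S1 S2 hr _ φ hf _

lemma mixedEval_GVal (F : Set (Sym L)) (M : Type) (S : L.Structure M) (t : GTerm L) :
    mixedEval F M S (GVal M S) t = GVal M S t := by
  induction t with
  | var e => exact e.elim
  | func f ts ih =>
      rw [mixedEval_func]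
      split
      · rfl
      · rw [GVal_func]
        congr 1
        funext i
        exact ih i

lemma LitRealizeEv_GVal {M : Type} (S : L.Structure M) (l : Lit L Empty) :
    LitRealizeEv M S (GVal M S) l ↔ Lit.Realize M S (fun e : Empty => e.elim) l := by
  cases l <;> exact Iff.rfl

end Aux
section Main

variable {L : FirstOrder.Language.{0, 0}}

theorem sat_iff_mixed (FS : Set (Sym L)) (T0 : L.Theory)
    (hdj : ∀ p ∈ theorySyms T0, p ∉ FS)
    (G' : Set (GClause L)) :
    SatTKG T0 ∅ G' ↔
    ∃ (M : Type) (_ : Nonempty M) (S : L.Structure M) (w : GTerm L → M),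
      ModelsT M S T0 ∧
      (∀ (n : ℕ) (f : L.Functions n) (ts us : Fin n → GTerm L),
        (⟨n, f⟩ : Sym L) ∈ FS →
        Term.func f ts ∈ estKG FS ∅ G' →
        Term.func f us ∈ estKG FS ∅ G' →
        (∀ i, mixedEval FS M S w (ts i) = mixedEval FS M S w (us i)) →
        w (Term.func f ts) = w (Term.func f us)) ∧
      (∀ C ∈ G', GClauseHoldsEv M S (mixedEval FS M S w) C) := by
  constructor
  · rintro ⟨M, hM, S, hT, -, hG⟩
    refine ⟨M, hM, S, GVal M S, hT, ?_, ?_⟩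
    · intro n f ts us _ _ _ h
      rw [GVal_func, GVal_func]
      congr 1
      funext i
      have hi := h i
      rwa [mixedEval_GVal, mixedEval_GVal] at hi
    · intro C hC
      obtain ⟨l, hl, hlr⟩ := hG C hC
      refine ⟨l, hl, ?_⟩
      have hev : mixedEval FS M S (GVal M S) = GVal M S := funext (mixedEval_GVal FS M S)
      rw [hev]
      exact (LitRealizeEv_GVal S l).mpr hlr
  · rintro ⟨M, hM, S, w, hT, hcong, hG⟩
    classical
    set cond : ∀ n : ℕ, L.Functions n → (Fin n → M) → Prop := fun n f x =>
      (⟨n, f⟩ : Sym L) ∈ FS ∧ ∃ ts : Fin n → GTerm L,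
        Term.func f ts ∈ estKG FS ∅ G' ∧ ∀ i, mixedEval FS M S w (ts i) = x i with hcond
    set S' : L.Structure M :=
      { funMap := fun {n} f x =>
          if h : cond n f x then w (Term.func f h.2.choose) else FunM M S f x,
        RelMap := fun {n} r x => RelM M S r x } with hS'
    have hrel : ∀ (k : ℕ) (r : L.Relations k) (x : Fin k → M),
        RelM M S' r x ↔ RelM M S r x := fun k r x => Iff.rfl
    have hfun_off : ∀ (n : ℕ) (f : L.Functions n), (⟨n, f⟩ : Sym L) ∉ FS →
        ∀ x : Fin n → M, FunM M S' f x = FunM M S f x := by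
      intro n f hf x
      show (if h : cond n f x then w (Term.func f h.2.choose) else FunM M S f x) = FunM M S f x
      rw [dif_neg]
      exact fun hc => hf hc.1
    have hfun_on : ∀ (n : ℕ) (f : L.Functions n) (ts : Fin n → GTerm L),
        (⟨n, f⟩ : Sym L) ∈ FS → Term.func f ts ∈ estKG FS ∅ G' →
        FunM M S' f (fun i => mixedEval FS M S w (ts i)) = w (Term.func f ts) := by
      intro n f ts hf htE
      have hc : cond n f (fun i => mixedEval FS M S w (ts i)) :=
        ⟨hf, ts, htE, fun i => rfl⟩
      show (if h : cond n f _ then w (Term.func f h.2.choose) else FunM M S f _) = _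
      rw [dif_pos hc]
      exact hcong n f hc.2.choose ts hf hc.2.choose_spec.1 htE
        (fun i => (hc.2.choose_spec.2 i))
    have hval : ∀ t : GTerm L, t ∈ GTerms G' → GVal M S' t = mixedEval FS M S w t := by
      intro t
      induction t with
      | var e => exact e.elim
      | func f ts ih =>
          intro ht
          have hts : ∀ i, ts i ∈ GTerms G' :=
            fun i => GTerms_closed ht (mem_subterms_arg f ts i)
          rw [GVal_func]
          have hargs : (fun i => GVal M S' (ts i)) = fun i => mixedEval FS M S w (ts i) :=
            funext fun i => ih i (hts i)
          rw [hargs, mixedEval_func]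
          by_cases hf : (⟨_, f⟩ : Sym L) ∈ FS
          · rw [if_pos hf]
            have htE : Term.func f ts ∈ estKG FS ∅ G' := by
              refine ⟨hf, Or.inr ?_⟩
              simpa only [GTerms, Set.mem_iUnion, exists_prop] using ht
            exact hfun_on _ f ts hf htE
          · rw [if_neg hf]
            exact hfun_off _ f hf _
    refine ⟨M, hM, S', ?_, ?_, ?_⟩
    · intro φ hφ
      have hsub : sentSyms φ ⊆ theorySyms T0 := by
        intro p hp
        simp only [theorySyms, Set.mem_iUnion]
        exact ⟨φ, hφ, hp⟩
      refine (RealizeSent_agree S' S φ ?_ hrel).mpr (hT φ hφ)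
      intro p hp x
      exact hfun_off p.1 p.2 (hdj p (hsub hp)) x
    · intro C hC
      exact absurd hC (Set.notMem_empty C)
    · intro C hC
      obtain ⟨l, hl, hlr⟩ := hG C hC
      refine ⟨l, hl, ?_⟩
      have hvt : ∀ t ∈ Lit.terms l, GVal M S' t = mixedEval FS M S w t := by
        intro t htl
        refine hval t ?_
        simp only [GTerms, GClause.gterms, Set.mem_iUnion]
        exact ⟨C, hC, l, hl, t, htl, mem_subterms_self t⟩
      cases l with
      | eq t u =>
          show GVal M S' t = GVal M S' u
          rw [hvt t (by simp [Lit.terms]), hvt u (by simp [Lit.terms])]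
          exact hlr
      | neq t u =>
          show GVal M S' t ≠ GVal M S' u
          rw [hvt t (by simp [Lit.terms]), hvt u (by simp [Lit.terms])]
          exact hlr
      | rel R ts =>
          show RelM M S' R (fun i => GVal M S' (ts i))
          have : (fun i => GVal M S' (ts i)) = fun i => mixedEval FS M S w (ts i) :=
            funext fun i => hvt (ts i) ⟨i, rfl⟩
          rw [this]
          exact (hrel _ R _).mpr hlr
      | nrel R ts =>
          show ¬ RelM M S' R (fun i => GVal M S' (ts i))
          have : (fun i => GVal M S' (ts i)) = fun i => mixedEval FS M S w (ts i) :=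
            funext fun i => hvt (ts i) ⟨i, rfl⟩
          rw [this]
          exact fun hcon => hlr ((hrel _ R _).mp hcon)

end Main

/-- Theorem `lemma-rel-transl`, hierarchical reasoning.  Let
`T0 ⊆ T0 ∪ K` be a `Ψ`-local theory extension and `G` a finite set of flat ground clauses
with no nestings of extension functions.  Then `T0 ∪ K ∪ G ⊨ ⊥` is equivalent to
(i) `T0 ∪ K[Ψ_K(G)] ∪ G ⊨ ⊥` and to (ii) the unsatisfiability of the flattened and purified
problem `T0 ∪ K0 ∪ G0 ∪ Con0`, rendered semantically: there are no `T0`-model `M` and values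
`w` for the purification constants (names of the extension ground terms `E` of
`K[Ψ_K(G)] ∪ G`) satisfying the congruence axioms `Con0` and making `K[Ψ_K(G)] ∪ G` true
under the purified evaluation. -/
theorem hierarchical_reasoning
    (L : FirstOrder.Language.{0, 0})
    (F0 FS CC : Set (Sym L))
    (hd01 : Disjoint F0 FS) (hd02 : Disjoint F0 CC) (hd12 : Disjoint FS CC)
    (hcover : F0 ∪ FS ∪ CC = Set.univ)
    (hCC0 : ∀ p ∈ CC, p.1 = 0)
    (T0 : L.Theory) (hT0 : theorySyms T0 ⊆ F0)
    (K : Set (Clause L)) (hKsyms : ClausesSyms K ⊆ F0 ∪ FS)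
    (Ψ : Set (GTerm L) → Set (GTerm L))
    (hΨext : ∀ Tset : Set (GTerm L), Tset ⊆ Ψ Tset)
    (hΨfin : ∀ Tset : Set (GTerm L), Tset.Finite → (Ψ Tset).Finite)
    (hloc : PsiLocalExt FS T0 K Ψ)
    (G : Set (GClause L)) (hGfin : G.Finite)
    (hGflat : ∀ C ∈ G, GClause.Flat FS C)
    (hGnonest : NoNest FS G) :
    -- the set `E` of extension ground terms occurring in `K[Ψ_K(G)] ∪ G`
    -- (named by fresh constants in the purification step) :
    (¬ SatTKG T0 K G ↔
      ¬ SatTKG T0 ∅ (instancesIn FS K (Ψ (estKG FS K G)) ∪ G)) ∧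
    (¬ SatTKG T0 K G ↔
      ¬ ∃ (M : Type) (_ : Nonempty M) (S : L.Structure M) (w : GTerm L → M),
          ModelsT M S T0 ∧
          -- the congruence axioms `Con0` :
          (∀ (n : ℕ) (f : L.Functions n) (ts us : Fin n → GTerm L),
            (⟨n, f⟩ : Sym L) ∈ FS →
            Term.func f ts ∈ estKG FS ∅ (instancesIn FS K (Ψ (estKG FS K G)) ∪ G) →
            Term.func f us ∈ estKG FS ∅ (instancesIn FS K (Ψ (estKG FS K G)) ∪ G) →
            (∀ i, mixedEval FS M S w (ts i) = mixedEval FS M S w (us i)) →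
            w (Term.func f ts) = w (Term.func f us)) ∧
          -- `K0 ∪ G0` : the purified instances and goal :
          (∀ C ∈ instancesIn FS K (Ψ (estKG FS K G)) ∪ G,
            GClauseHoldsEv M S (mixedEval FS M S w) C)) := by
  have hdj : ∀ p ∈ theorySyms T0, p ∉ FS :=
    fun p hp => Set.disjoint_left.mp hd01 (hT0 hp)
  refine ⟨hloc G hGfin, ?_⟩
  rw [hloc G hGfin]
  exact not_congr (sat_iff_mixed FS T0 hdj (instancesIn FS K (Ψ (estKG FS K G)) ∪ G))

end PaperSE
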